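/- Let 0 < μ < 1/2, let α_1 ≥ α_2 ≥ ⋯ ≥ α_N > 0 (after relabeling), let I_i = {1,…,i} (with I_0 = ∅), and let k be the smallest index i ∈ {0,…,N-1} such that (N - i - 2μ)√(α_{i+1}) < ∑_{j∉I_i} √(α_j). Define p̄ ∈ ℝ^N by p̄_i = 0 for i ∈ I_k and p̄_i = (1/(2μ))[1 - (N - k - 2μ)√(α_i)/∑_{j∉I_k}√(α_j)] for i ∉ I_k. Then p̄ lies in the simplex Δ_N and maximizes φ(p) = ∑_{i=1}^N (p_i/(2μp_i - 1))α_i over Δ_N. -/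

import Mathlib

/-- Statement of Proposition on the explicit maximizer of
`φ(p) = ∑ i, (p i / (2 μ p i - 1)) α i` over the simplex.
Indices are 0-based: `α 0 ≥ α 1 ≥ ⋯ ≥ α (N-1) > 0`, `I_i = {0, …, i-1}`,
and the complement of `I_i` inside `{0, …, N-1}` is `Finset.Ico i N`. -/
theorem stmt_12 (N : ℕ) (hN : 0 < N) (μ : ℝ) (hμ0 : 0 < μ) (hμ : μ < 1 / 2)
    (α : ℕ → ℝ) (hαpos : ∀ i < N, 0 < α i)
    (hαsorted : ∀ i j, i ≤ j → j < N → α j ≤ α i)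
    (k : ℕ) (hkN : k ≤ N - 1)
    (hk : ((N : ℝ) - k - 2 * μ) * Real.sqrt (α k) <
      ∑ j ∈ Finset.Ico k N, Real.sqrt (α j))
    (hkmin : ∀ i < k, ¬(((N : ℝ) - i - 2 * μ) * Real.sqrt (α i) <
      ∑ j ∈ Finset.Ico i N, Real.sqrt (α j)))
    (pbar : ℕ → ℝ)
    (hpbar : ∀ i < N, pbar i =
      if i < k then 0
      else (1 / (2 * μ)) *
        (1 - ((N : ℝ) - k - 2 * μ) * Real.sqrt (α i) /
          ∑ j ∈ Finset.Ico k N, Real.sqrt (α j))) :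
    (∀ i < N, 0 ≤ pbar i) ∧ (∑ i ∈ Finset.range N, pbar i = 1) ∧
      ∀ q : ℕ → ℝ, (∀ i < N, 0 ≤ q i) → (∑ i ∈ Finset.range N, q i = 1) →
        (∑ i ∈ Finset.range N, q i / (2 * μ * q i - 1) * α i) ≤
          ∑ i ∈ Finset.range N, pbar i / (2 * μ * pbar i - 1) * α i := by
  have hkN' : k < N := by omega
  set S : ℝ := ∑ j ∈ Finset.Ico k N, Real.sqrt (α j) with hSdef
  set c : ℝ := (N : ℝ) - k - 2 * μ with hcdef
  clear_value S c
  have hkR : (k : ℝ) + 1 ≤ (N : ℝ) := by exact_mod_cast hkN'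
  have hcpos : 0 < c := by rw [hcdef]; linarith
  have hsqrt_pos : ∀ i < N, 0 < Real.sqrt (α i) :=
    fun i hi => Real.sqrt_pos.mpr (hαpos i hi)
  have hSpos : 0 < S := by
    rw [hSdef]
    exact Finset.sum_pos (fun j hj => hsqrt_pos j (Finset.mem_Ico.mp hj).2)
      ⟨k, Finset.mem_Ico.mpr ⟨le_refl k, hkN'⟩⟩
  -- for i in the support, c√αᵢ < S
  have hlt : ∀ i, k ≤ i → i < N → c * Real.sqrt (α i) < S := by
    intro i h1 h2
    have hs : Real.sqrt (α i) ≤ Real.sqrt (α k) :=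
      Real.sqrt_le_sqrt (hαsorted k i h1 h2)
    nlinarith
  have hpb : ∀ i, k ≤ i → i < N →
      pbar i = 1 / (2 * μ) * (1 - c * Real.sqrt (α i) / S) := by
    intro i h1 h2
    rw [hpbar i h2, if_neg (not_lt.mpr h1)]
  have h2μp : ∀ i, k ≤ i → i < N →
      2 * μ * pbar i - 1 = -(c * Real.sqrt (α i) / S) := by
    intro i h1 h2
    rw [hpb i h1 h2]
    field_simp
    ring
  have hpbneg : ∀ i, k ≤ i → i < N → 2 * μ * pbar i - 1 < 0 := by
    intro i h1 h2
    rw [h2μp i h1 h2]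
    have := hsqrt_pos i h2
    have : 0 < c * Real.sqrt (α i) / S := by positivity
    linarith
  -- nonnegativity
  have hnn : ∀ i < N, 0 ≤ pbar i := by
    intro i hi
    by_cases hik : i < k
    · rw [hpbar i hi, if_pos hik]
    · push_neg at hik
      rw [hpb i hik hi]
      have h1 := hlt i hik hi
      have : 0 ≤ 1 - c * Real.sqrt (α i) / S := by
        rw [sub_nonneg, div_le_one hSpos]; linarith
      positivity
  -- sum equals 1
  have hsum1 : ∑ i ∈ Finset.range N, pbar i = 1 := by
    rw [Finset.range_eq_Ico, ← Finset.sum_Ico_consecutive _ (Nat.zero_le k) hkN'.le]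
    have h1 : ∑ i ∈ Finset.Ico 0 k, pbar i = 0 :=
      Finset.sum_eq_zero fun i hi => by
        have hik := (Finset.mem_Ico.mp hi).2
        rw [hpbar i (lt_of_lt_of_le hik hkN'.le), if_pos hik]
    have h2 : ∑ i ∈ Finset.Ico k N, pbar i = 1 := by
      have hcongr : ∀ i ∈ Finset.Ico k N,
          pbar i = 1 / (2 * μ) - c / (2 * μ * S) * Real.sqrt (α i) := by
        intro i hi
        obtain ⟨hi1, hi2⟩ := Finset.mem_Ico.mp hi
        rw [hpb i hi1 hi2]
        field_simp
        try ring
      rw [Finset.sum_congr rfl hcongr, Finset.sum_sub_distrib, Finset.sum_const,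
        ← Finset.mul_sum, ← hSdef, Nat.card_Ico, nsmul_eq_mul,
        Nat.cast_sub hkN'.le]
      rw [hcdef]
      field_simp
      ring
    rw [h1, h2, zero_add]
  refine ⟨hnn, hsum1, ?_⟩
  -- tangent line inequality
  have key : ∀ a b A : ℝ, 0 < A → 2 * μ * a - 1 < 0 → 2 * μ * b - 1 < 0 →
      a / (2 * μ * a - 1) * A ≤
        b / (2 * μ * b - 1) * A - A / (2 * μ * b - 1) ^ 2 * (a - b) := by
    intro a b A hA ha hb
    rw [← sub_nonneg]
    have hid : b / (2 * μ * b - 1) * A - A / (2 * μ * b - 1) ^ 2 * (a - b)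
        - a / (2 * μ * a - 1) * A
        = 2 * μ * A * (a - b) ^ 2 / (-((2 * μ * a - 1) * (2 * μ * b - 1) ^ 2)) := by
      have h1 : (2 * μ * a - 1) ≠ 0 := ne_of_lt ha
      have h2 : (2 * μ * b - 1) ≠ 0 := ne_of_lt hb
      rw [div_mul_eq_mul_div, div_mul_eq_mul_div, div_mul_eq_mul_div,
        div_sub_div _ _ h2 (pow_ne_zero 2 h2), div_sub_div _ _ (mul_ne_zero h2 (pow_ne_zero 2 h2)) h1,
        div_eq_div_iff (mul_ne_zero (mul_ne_zero h2 (pow_ne_zero 2 h2)) h1)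
          (neg_ne_zero.mpr (mul_ne_zero h1 (pow_ne_zero 2 h2)))]
      ring
    rw [hid]
    apply div_nonneg (by positivity)
    nlinarith [sq_nonneg (2 * μ * b - 1)]
  -- "gradient" on the support
  have hgrad : ∀ i, k ≤ i → i < N →
      α i / (2 * μ * pbar i - 1) ^ 2 = S ^ 2 / c ^ 2 := by
    intro i h1 h2
    rw [h2μp i h1 h2, neg_sq, div_pow, mul_pow, Real.sq_sqrt (hαpos i h2).le]
    have hα := (hαpos i h2).ne'
    field_simp
  -- off support: S ≤ c√αᵢ, hence τ ≤ αᵢ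
  have hoff : ∀ i < k, S ≤ c * Real.sqrt (α i) := by
    intro i hik
    have hk1 : k - 1 < k := by omega
    have hkm := hkmin (k - 1) hk1
    push_neg at hkm
    rw [Finset.sum_eq_sum_Ico_succ_bot (show k - 1 < N by omega)] at hkm
    have hidx : k - 1 + 1 = k := by omega
    rw [hidx] at hkm
    have hcast : ((k - 1 : ℕ) : ℝ) = (k : ℝ) - 1 := by
      have h1 : 1 ≤ k := by omega
      push_cast [h1]
      ring
    rw [hcast, ← hSdef] at hkm
    have hcoef : (N : ℝ) - ((k : ℝ) - 1) - 2 * μ = c + 1 := by rw [hcdef]; ring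
    rw [hcoef] at hkm
    have hS1 : S ≤ c * Real.sqrt (α (k - 1)) := by nlinarith
    have hmono : Real.sqrt (α (k - 1)) ≤ Real.sqrt (α i) :=
      Real.sqrt_le_sqrt (hαsorted i (k - 1) (by omega) (by omega))
    nlinarith
  have hτle : ∀ i < k, S ^ 2 / c ^ 2 ≤ α i := by
    intro i hik
    have h1 := hoff i hik
    have h2 : 0 ≤ Real.sqrt (α i) := Real.sqrt_nonneg _
    have h3 : Real.sqrt (α i) ^ 2 = α i := Real.sq_sqrt (hαpos i (by omega)).le
    rw [div_le_iff₀ (by positivity)]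
    nlinarith
  intro q hq0 hq1
  have hqle1 : ∀ i < N, q i ≤ 1 := by
    intro i hi
    calc q i ≤ ∑ j ∈ Finset.range N, q j :=
          Finset.single_le_sum (fun j hj => hq0 j (Finset.mem_range.mp hj))
            (Finset.mem_range.mpr hi)
      _ = 1 := hq1
  have hqneg : ∀ i < N, 2 * μ * q i - 1 < 0 := by
    intro i hi
    have h1 := hqle1 i hi
    have h2 := hq0 i hi
    nlinarith
  have main : ∀ i ∈ Finset.range N,
      q i / (2 * μ * q i - 1) * α i + S ^ 2 / c ^ 2 * q i ≤
        pbar i / (2 * μ * pbar i - 1) * α i + S ^ 2 / c ^ 2 * pbar i := by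
    intro i hi
    have hiN := Finset.mem_range.mp hi
    by_cases hik : i < k
    · rw [hpbar i hiN, if_pos hik]
      have h0 := key (q i) 0 (α i) (hαpos i hiN) (hqneg i hiN) (by norm_num)
      norm_num at h0 ⊢
      have hτα := hτle i hik
      have hqi := hq0 i hiN
      have h1 : S ^ 2 / c ^ 2 * q i ≤ α i * q i :=
        mul_le_mul_of_nonneg_right hτα hqi
      linarith
    · push_neg at hik
      have h0 := key (q i) (pbar i) (α i) (hαpos i hiN) (hqneg i hiN)
        (hpbneg i hik hiN)
      rw [hgrad i hik hiN] at h0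
      linarith
  have hsum := Finset.sum_le_sum main
  rw [Finset.sum_add_distrib, Finset.sum_add_distrib, ← Finset.mul_sum,
    ← Finset.mul_sum, hq1, hsum1] at hsum
  linarith
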